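/- Let H be a real Hilbert space and let P_1, …, P_n (n ≥ 1) be orthogonal projections on H satisfying ‖(1/n) Σ_{i=1}^n P_i‖ ≤ 1 − δ for some δ > 0. Then the full product in index order satisfies ‖P_n P_{n−1} ⋯ P_1‖ ≤ 1 − δ / (8(n+1)). -/

import Mathlib

open scoped RealInnerProductSpace

/-- A bounded operator on a real Hilbert space is an orthogonal projection if it is
self-adjoint and idempotent. -/
def IsOrthProj {H : Type*} [NormedAddCommGroup H] [InnerProductSpace ℝ H]
    (P : H →L[ℝ] H) : Prop :=
  (∀ x y : H, ⟪P x, y⟫ = ⟪x, P y⟫) ∧ ∀ x : H, P (P x) = P x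

section Aux

variable {H : Type*} [NormedAddCommGroup H] [InnerProductSpace ℝ H]

theorem IsOrthProj.inner_self {P : H →L[ℝ] H} (h : IsOrthProj P) (y : H) :
    ⟪P y, y⟫ = ‖P y‖ ^ 2 := by
  have h1 : ⟪P y, y⟫ = ⟪P (P y), y⟫ := by rw [h.2]
  rw [h1, h.1 (P y) y, real_inner_comm, ← real_inner_comm (P y) (P y),
    real_inner_self_eq_norm_sq]

theorem IsOrthProj.pyth {P : H →L[ℝ] H} (h : IsOrthProj P) (y : H) :
    ‖y‖ ^ 2 = ‖P y‖ ^ 2 + ‖y - P y‖ ^ 2 := by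
  have h2 := norm_sub_sq_real y (P y)
  have h3 : ⟪y, P y⟫ = ‖P y‖ ^ 2 := by rw [real_inner_comm]; exact h.inner_self y
  rw [h3] at h2
  linarith

theorem IsOrthProj.norm_apply_le {P : H →L[ℝ] H} (h : IsOrthProj P) (y : H) :
    ‖P y‖ ≤ ‖y‖ := by
  have h1 := h.pyth y
  nlinarith [norm_nonneg (P y), norm_nonneg y, sq_nonneg (‖y - P y‖)]

end Aux

set_option maxHeartbeats 2000000 in
/-- If `P_1, …, P_n` are orthogonal projections with `‖(1/n) ∑ P_i‖ ≤ 1 - δ`, then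
`‖P_n ⋯ P_1‖ ≤ 1 - δ/(8(n+1))`. -/
theorem scan_gap_of_glauber_gap
    {H : Type*} [NormedAddCommGroup H] [InnerProductSpace ℝ H] [CompleteSpace H]
    (n : ℕ) (hn : 1 ≤ n) (P : Fin n → H →L[ℝ] H)
    (hP : ∀ j, IsOrthProj (P j))
    (δ : ℝ) (hδ : 0 < δ)
    (hgap : ‖(n : ℝ)⁻¹ • ∑ j, P j‖ ≤ 1 - δ) :
    ‖((List.ofFn P).reverse).prod‖ ≤ 1 - δ / (8 * (n + 1)) := by
  classical
  have hn0 : (0:ℝ) < n := by exact_mod_cast hn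
  obtain ⟨ε, hεdef⟩ : ∃ ε : ℝ, ε = δ / (8 * ((n : ℝ) + 1)) := ⟨_, rfl⟩
  have h8 : (0:ℝ) < 8 * ((n:ℝ) + 1) := by positivity
  have hε : 0 < ε := by rw [hεdef]; exact div_pos hδ h8
  have hδ1 : δ ≤ 1 := by
    have h0 := norm_nonneg ((n : ℝ)⁻¹ • ∑ j, P j)
    linarith
  have hε1 : ε ≤ 1 := by
    rw [hεdef, div_le_one h8]; nlinarith
  have hcast : 1 - δ / (8 * ((n:ℝ) + 1)) = 1 - ε := by rw [hεdef]
  rw [hcast]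
  have h1ε : (0:ℝ) ≤ 1 - ε := by linarith
  apply ContinuousLinearMap.opNorm_le_bound _ h1ε
  intro x
  by_contra hx
  push_neg at hx
  -- auxiliary extended family of projections
  obtain ⟨Pe, hPej⟩ : ∃ Pe : ℕ → (H →L[ℝ] H), ∀ (i : ℕ) (h : i < n), Pe i = P ⟨i, h⟩ :=
    ⟨fun i => if h : i < n then P ⟨i, h⟩ else 1, fun i h => dif_pos h⟩
  -- the orbit sequence
  obtain ⟨xs, xs0, xss⟩ : ∃ xs : ℕ → H, xs 0 = x ∧ ∀ i, xs (i + 1) = Pe i (xs i) :=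
    ⟨fun i => Nat.rec x (fun k y => Pe k y) i, rfl, fun i => rfl⟩
  have hlen : (List.ofFn P).length = n := List.length_ofFn
  have key : ∀ i, i ≤ n → ((List.ofFn P).take i).reverse.prod x = xs i := by
    intro i
    induction i with
    | zero => intro _; simp [xs0]
    | succ i ih =>
      intro h
      have hi : i < n := h
      have hget : (List.ofFn P)[i]? = some (P ⟨i, hi⟩) := by
        rw [List.getElem?_eq_getElem (by simpa [hlen] using hi)]
        simp
      rw [List.take_succ, hget]
      simp only [Option.toList_some, List.reverse_append, List.reverse_cons, List.reverse_nil,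
        List.nil_append, List.singleton_append, List.prod_cons, ContinuousLinearMap.mul_apply]
      rw [ih (le_of_lt hi), xss i, hPej i hi]
  have hQx : ((List.ofFn P).reverse).prod x = xs n := by
    have h := key n le_rfl
    have ht : (List.ofFn P).take n = List.ofFn P :=
      List.take_of_length_le (le_of_eq hlen)
    rwa [ht] at h
  rw [hQx] at hx
  -- step norms
  obtain ⟨d, hd⟩ : ∃ d : ℕ → ℝ, ∀ k, d k = ‖xs (k + 1) - xs k‖ := ⟨_, fun _ => rfl⟩
  have hd0 : ∀ k, 0 ≤ d k := fun k => (hd k) ▸ norm_nonneg _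
  have pyth_k : ∀ k, k < n → ‖xs k‖ ^ 2 = ‖xs (k + 1)‖ ^ 2 + d k ^ 2 := by
    intro k hk
    have h1 := (hP ⟨k, hk⟩).pyth (xs k)
    have h2 : d k = ‖xs k - P ⟨k, hk⟩ (xs k)‖ := by
      rw [hd, xss k, hPej k hk, norm_sub_rev]
    rw [h2, xss k, hPej k hk]
    exact h1
  have sumsq : ∑ k ∈ Finset.range n, d k ^ 2 = ‖x‖ ^ 2 - ‖xs n‖ ^ 2 := by
    have h1 : ∀ k ∈ Finset.range n, d k ^ 2 = ‖xs k‖ ^ 2 - ‖xs (k + 1)‖ ^ 2 := by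
      intro k hk
      have := pyth_k k (Finset.mem_range.mp hk); linarith
    rw [Finset.sum_congr rfl h1, Finset.sum_range_sub' (fun k => ‖xs k‖ ^ 2) n, xs0]
  have hxsn : ‖xs n‖ ^ 2 ≤ ‖x‖ ^ 2 := by
    have h1 : 0 ≤ ∑ k ∈ Finset.range n, d k ^ 2 :=
      Finset.sum_nonneg fun k _ => sq_nonneg _
    linarith [sumsq]
  have hxsn0 : 0 < ‖xs n‖ := lt_of_le_of_lt (mul_nonneg h1ε (norm_nonneg x)) hx
  have hxpos : 0 < ‖x‖ := by
    nlinarith [pow_pos hxsn0 2, hxsn, norm_nonneg x]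
  -- distance to the start
  have dist_le : ∀ i, i ≤ n → ‖x - xs i‖ ≤ ∑ k ∈ Finset.range i, d k := by
    intro i
    induction i with
    | zero => intro _; simp [xs0]
    | succ i ih =>
      intro h
      have h1 : ‖x - xs (i + 1)‖ ≤ ‖x - xs i‖ + ‖xs i - xs (i + 1)‖ := by
        have := norm_sub_le_norm_sub_add_norm_sub x (xs i) (xs (i + 1))
        linarith
      have h2 : ‖xs i - xs (i + 1)‖ = d i := by rw [hd, norm_sub_rev]
      rw [Finset.sum_range_succ]
      have h3 := ih (by omega)
      linarith
  obtain ⟨S, hSdef⟩ : ∃ S : ℝ, S = ∑ k ∈ Finset.range n, d k := ⟨_, rfl⟩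
  have hS0 : 0 ≤ S := hSdef ▸ Finset.sum_nonneg fun k _ => hd0 k
  have partial_le : ∀ i, i ≤ n → ∑ k ∈ Finset.range i, d k ≤ S := by
    intro i hi
    rw [hSdef]
    exact Finset.sum_le_sum_of_subset_of_nonneg (Finset.range_subset_range.mpr hi)
      (fun k _ _ => hd0 k)
  -- per-projection displacement bound
  have perj : ∀ j : Fin n, ‖x - P j x‖ ≤ 2 * S := by
    intro j
    have hjlt : (j : ℕ) < n := j.isLt
    have hPj : Pe (j : ℕ) = P j := by rw [hPej _ hjlt]
    have h1 : ‖x - P j x‖ ≤ ‖x - xs j‖ + ‖xs (j : ℕ) - P j (xs j)‖ + ‖P j (xs j) - P j x‖ := by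
      have t1 : x - P j x =
          (x - xs j) + ((xs (j : ℕ) - P j (xs j)) + (P j (xs j) - P j x)) := by abel
      rw [t1]
      calc ‖(x - xs j) + ((xs (j : ℕ) - P j (xs j)) + (P j (xs j) - P j x))‖
          ≤ ‖x - xs j‖ + ‖(xs (j : ℕ) - P j (xs j)) + (P j (xs j) - P j x)‖ :=
            norm_add_le _ _
        _ ≤ ‖x - xs j‖ + (‖xs (j : ℕ) - P j (xs j)‖ + ‖P j (xs j) - P j x‖) := by
            linarith [norm_add_le (xs (j : ℕ) - P j (xs j)) (P j (xs j) - P j x)]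
        _ = _ := by ring
    have h2 : ‖x - xs (j : ℕ)‖ ≤ ∑ k ∈ Finset.range (j : ℕ), d k := dist_le _ (le_of_lt hjlt)
    have h3 : ‖xs (j : ℕ) - P j (xs j)‖ = d (j : ℕ) := by
      rw [hd, ← hPj, ← xss, norm_sub_rev]
    have h4 : ‖P j (xs j) - P j x‖ ≤ ∑ k ∈ Finset.range (j : ℕ), d k := by
      have h5 : P j (xs j) - P j x = P j (xs (j : ℕ) - x) := by
        rw [map_sub]
      rw [h5]
      calc ‖P j (xs (j : ℕ) - x)‖ ≤ ‖xs (j : ℕ) - x‖ := (hP j).norm_apply_le _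
        _ = ‖x - xs (j : ℕ)‖ := norm_sub_rev _ _
        _ ≤ _ := h2
    have h6 : ∑ k ∈ Finset.range ((j : ℕ) + 1), d k ≤ S := partial_le _ (by omega)
    rw [Finset.sum_range_succ] at h6
    have h7 : ∑ k ∈ Finset.range (j : ℕ), d k + d (j : ℕ) ≤ S := h6
    have h8' : 0 ≤ ∑ k ∈ Finset.range (j : ℕ), d k := Finset.sum_nonneg fun k _ => hd0 k
    linarith [hd0 (j : ℕ)]
  -- Cauchy–Schwarz
  have cauchy : S ^ 2 ≤ (n : ℝ) * ∑ k ∈ Finset.range n, d k ^ 2 := by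
    have h := sq_sum_le_card_mul_sum_sq (s := Finset.range n) (f := d)
    rw [hSdef]
    simpa using h
  -- lower bound from the gap hypothesis
  have lower : (n : ℝ) * δ * ‖x‖ ^ 2 ≤ ∑ j : Fin n, ‖x - P j x‖ ^ 2 := by
    have h1 : ∀ j : Fin n, ‖x - P j x‖ ^ 2 = ‖x‖ ^ 2 - ⟪P j x, x⟫ := by
      intro j
      have hp := (hP j).pyth x
      have hi := (hP j).inner_self x
      linarith
    have h2 : ∑ j : Fin n, ‖x - P j x‖ ^ 2 = (n : ℝ) * ‖x‖ ^ 2 - ⟪(∑ j, P j) x, x⟫ := by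
      rw [Finset.sum_congr rfl fun j _ => h1 j, Finset.sum_sub_distrib,
        ContinuousLinearMap.sum_apply, sum_inner]
      simp [Finset.card_univ]
    have h3 : ⟪(∑ j, P j) x, x⟫ = (n : ℝ) * ⟪((n : ℝ)⁻¹ • ∑ j, P j) x, x⟫ := by
      rw [ContinuousLinearMap.smul_apply, real_inner_smul_left]
      field_simp
    have h4 : ⟪((n : ℝ)⁻¹ • ∑ j, P j) x, x⟫ ≤ (1 - δ) * ‖x‖ ^ 2 := by
      have h5 := real_inner_le_norm (((n : ℝ)⁻¹ • ∑ j, P j) x) x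
      have h6 := ((n : ℝ)⁻¹ • ∑ j, P j).le_opNorm x
      nlinarith [norm_nonneg x, norm_nonneg (((n : ℝ)⁻¹ • ∑ j, P j) x)]
    nlinarith [h2, h3, h4]
  -- upper bound by displacements
  have upper : ∑ j : Fin n, ‖x - P j x‖ ^ 2 ≤ (n : ℝ) * (4 * S ^ 2) := by
    calc ∑ j : Fin n, ‖x - P j x‖ ^ 2 ≤ ∑ _j : Fin n, (2 * S) ^ 2 :=
          Finset.sum_le_sum fun j _ => by
            nlinarith [perj j, norm_nonneg (x - P j x)]
      _ = (n : ℝ) * (4 * S ^ 2) := by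
          rw [Finset.sum_const, Finset.card_univ, Fintype.card_fin, nsmul_eq_mul]
          ring
  -- combine
  have ha : 0 ≤ (1 - ε) * ‖x‖ := mul_nonneg h1ε (norm_nonneg x)
  have step1 : (1 - ε) ^ 2 * ‖x‖ ^ 2 < ‖xs n‖ ^ 2 := by
    have := mul_self_lt_mul_self ha hx
    nlinarith [this]
  have step3 : ‖x‖ ^ 2 - ‖xs n‖ ^ 2 < 2 * ε * ‖x‖ ^ 2 := by
    nlinarith [step1, sq_nonneg (ε * ‖x‖)]
  have step2 : (n : ℝ) * δ * ‖x‖ ^ 2 ≤ 4 * (n : ℝ) ^ 2 * (‖x‖ ^ 2 - ‖xs n‖ ^ 2) := by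
    have hc4 : 4 * (n : ℝ) * S ^ 2 ≤ 4 * (n : ℝ) * ((n : ℝ) * ∑ k ∈ Finset.range n, d k ^ 2) :=
      mul_le_mul_of_nonneg_left cauchy (by positivity)
    nlinarith [lower, upper, hc4, sumsq]
  have step4 : (n : ℝ) * δ * ‖x‖ ^ 2 < 8 * (n : ℝ) ^ 2 * ε * ‖x‖ ^ 2 := by
    have h9 : (0:ℝ) < 4 * (n : ℝ) ^ 2 := by positivity
    nlinarith [mul_lt_mul_of_pos_left step3 h9, step2]
  have step5 : δ < 8 * (n : ℝ) * ε := by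
    have hx2 : 0 < ‖x‖ ^ 2 := by positivity
    nlinarith [step4, mul_pos hn0 hx2]
  rw [hεdef] at step5
  have heq : 8 * (n : ℝ) * (δ / (8 * ((n : ℝ) + 1))) = (n : ℝ) * δ / ((n : ℝ) + 1) := by
    field_simp
  rw [heq, lt_div_iff₀ (by positivity : (0:ℝ) < (n : ℝ) + 1)] at step5
  nlinarith [step5, hδ]
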